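/- Let s be complex with 0 < Re s ≤ 1 and let σ := Re s. If z → 1 along the real axis from below (z real, 0 < z < 1), then |(z-1) · Li_s(z)| ≤ C · (1-z)^(σ/(1+σ)) for a uniform constant C = 2e^(1/e), for 1-z sufficiently small; in particular (z-1)·Li_s(z) → 0 as z → 1⁻. -/

import Mathlib

open Real Finset

private lemma aux_summable' {z : ℝ} (hz0 : 0 < z) (hz1 : z < 1) (σ : ℝ) (hσ : 0 < σ) :
    Summable (fun n : ℕ => z ^ (n + 1) / ((n : ℝ) + 1) ^ σ) := by
  have hg : Summable (fun n : ℕ => z ^ (n + 1)) := by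
    simpa [pow_succ] using (summable_geometric_of_lt_one hz0.le hz1).mul_right z
  refine Summable.of_nonneg_of_le (fun n => by positivity) (fun n => ?_) hg
  have h1 : (1 : ℝ) ≤ ((n : ℝ) + 1) ^ σ := by
    have : (1:ℝ) ^ σ ≤ ((n : ℝ) + 1) ^ σ :=
      Real.rpow_le_rpow zero_le_one (by linarith [Nat.cast_nonneg (α := ℝ) n]) hσ.le
    simpa using this
  calc z ^ (n + 1) / ((n : ℝ) + 1) ^ σ ≤ z ^ (n + 1) / 1 := by
        apply div_le_div_of_nonneg_left (by positivity) one_pos h1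
    _ = z ^ (n + 1) := by ring

private lemma key_real' {σ : ℝ} (hσ0 : 0 < σ) {z : ℝ} (hz0 : 0 < z) (hz1 : z < 1) :
    (1 - z) * ∑' n : ℕ, z ^ (n + 1) / ((n : ℝ) + 1) ^ σ ≤
      2 * (1 - z) ^ (σ / (1 + σ)) + (1 - z) := by
  set δ : ℝ := 1 - z with hδ
  have hδ0 : 0 < δ := by simp only [hδ]; linarith
  have hδ1 : δ < 1 := by simp only [hδ]; linarith
  have h1σ : (0:ℝ) < 1 + σ := by linarith
  set T : ℝ := δ ^ (-(1 / (1 + σ))) with hT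
  have hT1 : 1 ≤ T := Real.one_le_rpow_of_pos_of_le_one_of_nonpos hδ0 hδ1.le
    (neg_nonpos.mpr (by positivity))
  have hT0 : 0 < T := by linarith
  set N : ℕ := ⌈T⌉₊ with hN
  have hTN : T ≤ N := Nat.le_ceil T
  have hNT : (N : ℝ) < T + 1 := Nat.ceil_lt_add_one hT0.le
  set f : ℕ → ℝ := fun n => z ^ (n + 1) / ((n : ℝ) + 1) ^ σ with hf
  have hsum : Summable f := aux_summable' hz0 hz1 σ hσ0
  set A : ℝ := δ ^ (σ / (1 + σ)) with hA
  have hdT : δ * T = A := by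
    have : A = δ ^ (1 + -(1 / (1 + σ))) := by
      rw [hA]; congr 1; field_simp; ring
    rw [this, Real.rpow_add hδ0, Real.rpow_one]
  have hTσ : (T ^ σ)⁻¹ = A := by
    rw [hT, ← Real.rpow_mul hδ0.le,
      show -(1 / (1 + σ)) * σ = -(σ / (1 + σ)) by ring,
      Real.rpow_neg hδ0.le, inv_inv, hA]
  rw [← Summable.sum_add_tsum_nat_add N hsum]
  have hhead : ∑ i ∈ Finset.range N, f i ≤ N := by
    have := Finset.sum_le_card_nsmul (Finset.range N) f 1 (fun i _ => by
      have h1 : (1 : ℝ) ≤ ((i : ℝ) + 1) ^ σ := by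
        have : (1:ℝ) ^ σ ≤ ((i : ℝ) + 1) ^ σ :=
          Real.rpow_le_rpow zero_le_one (by linarith [Nat.cast_nonneg (α := ℝ) i]) hσ0.le
        simpa using this
      have hz : z ^ (i + 1) ≤ 1 := pow_le_one₀ hz0.le hz1.le
      calc f i ≤ z ^ (i + 1) / 1 := div_le_div_of_nonneg_left (by positivity) one_pos h1
        _ ≤ 1 := by simpa using hz)
    simpa using this
  have htail : ∑' n : ℕ, f (n + N) ≤ (T ^ σ)⁻¹ * δ⁻¹ := by
    have hb : ∀ n : ℕ, f (n + N) ≤ (T ^ σ)⁻¹ * z ^ (n + 1) := by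
      intro n
      have hden : T ^ σ ≤ ((n + N : ℝ) + 1) ^ σ := by
        apply Real.rpow_le_rpow hT0.le _ hσ0.le
        push_cast; linarith
      have hnum : z ^ (n + N + 1) ≤ z ^ (n + 1) :=
        pow_le_pow_of_le_one hz0.le hz1.le (by omega)
      have hTpos : (0:ℝ) < T ^ σ := Real.rpow_pos_of_pos hT0 σ
      calc f (n + N) = z ^ (n + N + 1) / ((n + N : ℝ) + 1) ^ σ := by
            simp only [hf]; push_cast; ring_nf
        _ ≤ z ^ (n + 1) / T ^ σ := by
            apply div_le_div₀ (by positivity) hnum hTpos hden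
        _ = (T ^ σ)⁻¹ * z ^ (n + 1) := by ring
    have hsb : Summable (fun n : ℕ => (T ^ σ)⁻¹ * z ^ (n + 1)) := by
      apply Summable.mul_left
      simpa [pow_succ] using (summable_geometric_of_lt_one hz0.le hz1).mul_right z
    calc ∑' n : ℕ, f (n + N) ≤ ∑' n : ℕ, (T ^ σ)⁻¹ * z ^ (n + 1) :=
          Summable.tsum_le_tsum hb ((hsum.comp_injective (add_left_injective N))) hsb
      _ = (T ^ σ)⁻¹ * (z * (1 - z)⁻¹) := by
          rw [tsum_mul_left]; congr 1
          simp only [pow_succ, mul_comm]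
          rw [tsum_mul_left, tsum_geometric_of_lt_one hz0.le hz1]
      _ ≤ (T ^ σ)⁻¹ * δ⁻¹ := by
          apply mul_le_mul_of_nonneg_left _ (by positivity)
          rw [hδ]
          calc z * (1 - z)⁻¹ ≤ 1 * (1 - z)⁻¹ := by
                apply mul_le_mul_of_nonneg_right hz1.le (by positivity)
            _ = (1 - z)⁻¹ := by ring
  have halt : ∑ i ∈ Finset.range N, f i + ∑' n, f (n + N) ≤ (T + 1) + (T ^ σ)⁻¹ * δ⁻¹ := by
    have : (N : ℝ) ≤ T + 1 := hNT.le
    linarith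
  calc δ * (∑ i ∈ Finset.range N, f i + ∑' n, f (n + N)) ≤ δ * ((T + 1) + (T ^ σ)⁻¹ * δ⁻¹) :=
        mul_le_mul_of_nonneg_left halt hδ0.le
    _ = δ * T + δ + (T ^ σ)⁻¹ * (δ * δ⁻¹) := by ring
    _ = A + δ + A := by rw [hdT, hTσ, mul_inv_cancel₀ hδ0.ne']; ring
    _ = 2 * A + δ := by ring

theorem polylog_times_z_sub_one_bound :
    ∃ C ε₀ : ℝ, C = 2 * Real.exp 1 ^ (1 / Real.exp 1) ∧ 0 < ε₀ ∧
      (∀ (s : ℂ) (z : ℝ), 0 < s.re → s.re ≤ 1 → 0 < z → z < 1 → 1 - z < ε₀ →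
        ‖(((z : ℂ) - 1) * ∑' n : ℕ, (z : ℂ) ^ (n + 1) / ((n : ℂ) + 1) ^ s)‖ ≤
          C * (1 - z) ^ (s.re / (1 + s.re))) ∧
      ∀ s : ℂ, 0 < s.re → s.re ≤ 1 →
        Filter.Tendsto
          (fun z : ℝ => ((z : ℂ) - 1) * ∑' n : ℕ, (z : ℂ) ^ (n + 1) / ((n : ℂ) + 1) ^ s)
          (nhdsWithin 1 (Set.Iio 1)) (nhds 0) := by
  set C : ℝ := 2 * Real.exp 1 ^ (1 / Real.exp 1) with hCdef
  -- numeric bound on C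
  have hCge : 2 + 0.73 ≤ C := by
    have he : Real.exp 1 < 2.7182818286 := Real.exp_one_lt_d9
    have he0 : (0:ℝ) < Real.exp 1 := Real.exp_pos 1
    have h1e : (0.3678:ℝ) ≤ 1 / Real.exp 1 := by
      rw [le_div_iff₀ he0]; nlinarith
    have hex : 1 / Real.exp 1 + 1 ≤ Real.exp (1 / Real.exp 1) :=
      Real.add_one_le_exp _
    rw [hCdef, Real.exp_one_rpow]
    nlinarith
  have hC2 : (0:ℝ) ≤ C - 2 := by norm_num at hCge ⊢; linarith
  have hbound : ∀ (s : ℂ) (z : ℝ), 0 < s.re → s.re ≤ 1 → 0 < z → z < 1 → 1 - z < 1/2 →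
      ‖(((z : ℂ) - 1) * ∑' n : ℕ, (z : ℂ) ^ (n + 1) / ((n : ℂ) + 1) ^ s)‖ ≤
        C * (1 - z) ^ (s.re / (1 + s.re)) := by
    intro s z hs0 hs1 hz0 hz1 hzε
    set σ : ℝ := s.re with hσ
    have h1σ : (0:ℝ) < 1 + σ := by linarith
    set δ : ℝ := 1 - z with hδ
    have hδ0 : 0 < δ := by simp only [hδ]; linarith
    have hδ1 : δ < 1 := by simp only [hδ]; linarith
    set A : ℝ := δ ^ (σ / (1 + σ)) with hA
    have hA0 : 0 < A := Real.rpow_pos_of_pos hδ0 _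
    -- norms of individual terms
    have hterm : ∀ n : ℕ, ‖(z:ℂ) ^ (n + 1) / ((n:ℂ) + 1) ^ s‖ =
        z ^ (n + 1) / ((n : ℝ) + 1) ^ σ := by
      intro n
      rw [norm_div, norm_pow, Complex.norm_real, Real.norm_of_nonneg hz0.le]
      congr 1
      have hcast : ((n:ℂ) + 1) = ((((n:ℝ) + 1) : ℝ) : ℂ) := by push_cast; ring
      rw [hcast,
        Complex.norm_cpow_eq_rpow_re_of_pos (by positivity)]
    have hsumnorm : Summable (fun n : ℕ => ‖(z:ℂ) ^ (n + 1) / ((n:ℂ) + 1) ^ s‖) := by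
      have := aux_summable' hz0 hz1 σ hs0
      apply this.congr
      intro n; exact (hterm n).symm
    have hS : ‖(∑' n : ℕ, (z : ℂ) ^ (n + 1) / ((n : ℂ) + 1) ^ s)‖ ≤
        ∑' n : ℕ, z ^ (n + 1) / ((n : ℝ) + 1) ^ σ := by
      calc ‖∑' n : ℕ, (z : ℂ) ^ (n + 1) / ((n : ℂ) + 1) ^ s‖
          ≤ ∑' n : ℕ, ‖(z:ℂ) ^ (n + 1) / ((n:ℂ) + 1) ^ s‖ := norm_tsum_le_tsum_norm hsumnorm
        _ = ∑' n : ℕ, z ^ (n + 1) / ((n : ℝ) + 1) ^ σ := tsum_congr hterm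
    have habs1 : ‖((z:ℂ) - 1)‖ = δ := by
      have : ((z:ℂ) - 1) = (((z - 1 : ℝ)) : ℂ) := by push_cast; ring
      rw [this, Complex.norm_real, Real.norm_eq_abs, abs_of_neg (by linarith), hδ]; ring
    have hmain : ‖(((z : ℂ) - 1) * ∑' n : ℕ, (z : ℂ) ^ (n + 1) / ((n : ℂ) + 1) ^ s)‖
        ≤ 2 * A + δ := by
      rw [norm_mul, habs1]
      calc δ * ‖(∑' n : ℕ, (z : ℂ) ^ (n + 1) / ((n : ℂ) + 1) ^ s)‖
          ≤ δ * ∑' n : ℕ, z ^ (n + 1) / ((n : ℝ) + 1) ^ σ :=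
            mul_le_mul_of_nonneg_left hS hδ0.le
        _ ≤ 2 * A + δ := by
            have := key_real' hs0 hz0 hz1
            rw [← hδ, ← hA] at this
            exact this
    -- δ ≤ (C - 2) * A
    have hδA : δ ≤ (C - 2) * A := by
      have hsplit : δ ^ (1 / (1 + σ)) * A = δ := by
        rw [hA, ← Real.rpow_add hδ0,
          show 1 / (1 + σ) + σ / (1 + σ) = 1 by field_simp, Real.rpow_one]
      have h12 : (1:ℝ)/2 ≤ 1 / (1 + σ) := by
        rw [div_le_div_iff₀ (by norm_num) h1σ]; linarith
      have h1 : δ ^ (1 / (1 + σ)) ≤ δ ^ ((1:ℝ)/2) :=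
        Real.rpow_le_rpow_of_exponent_ge hδ0 hδ1.le h12
      have h2 : δ ^ ((1:ℝ)/2) ≤ ((1:ℝ)/2) ^ ((1:ℝ)/2) :=
        Real.rpow_le_rpow hδ0.le hzε.le (by norm_num)
      have h3 : ((1:ℝ)/2) ^ ((1:ℝ)/2) ≤ 0.73 := by
        rw [← Real.sqrt_eq_rpow]
        rw [show (0.73:ℝ) = Real.sqrt (0.73 ^ 2) from (Real.sqrt_sq (by norm_num)).symm]
        apply Real.sqrt_le_sqrt; norm_num
      have h4 : (0.73:ℝ) ≤ C - 2 := by norm_num at hCge ⊢; linarith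
      calc δ = δ ^ (1 / (1 + σ)) * A := hsplit.symm
        _ ≤ (C - 2) * A := by
            apply mul_le_mul_of_nonneg_right _ hA0.le
            linarith
    calc ‖(((z : ℂ) - 1) * ∑' n : ℕ, (z : ℂ) ^ (n + 1) / ((n : ℂ) + 1) ^ s)‖
        ≤ 2 * A + δ := hmain
      _ ≤ 2 * A + (C - 2) * A := by linarith
      _ = C * A := by ring
  refine ⟨C, 1/2, rfl, by norm_num, hbound, ?_⟩
  intro s hs0 hs1
  have hp0 : 0 < s.re / (1 + s.re) := div_pos hs0 (by linarith)
  apply squeeze_zero_norm' (a := fun z : ℝ => C * (1 - z) ^ (s.re / (1 + s.re)))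
  · have hmem : Set.Ioo (1/2 : ℝ) 1 ∈ nhdsWithin 1 (Set.Iio 1) :=
      Ioo_mem_nhdsLT_of_mem (Set.mem_Ioc.mpr ⟨by norm_num, le_refl 1⟩)
    filter_upwards [hmem] with z hz
    exact hbound s z hs0 hs1 (by linarith [hz.1]) hz.2 (by linarith [hz.1])
  · have h0 : Filter.Tendsto (fun z : ℝ => 1 - z) (nhdsWithin 1 (Set.Iio 1)) (nhds 0) := by
      have hc : Continuous (fun z : ℝ => 1 - z) := by continuity
      have h : Filter.Tendsto (fun z : ℝ => 1 - z) (nhds 1) (nhds (1 - 1)) := hc.tendsto 1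
      simpa using h.mono_left nhdsWithin_le_nhds
    have hp : ContinuousAt (fun x : ℝ => x ^ (s.re / (1 + s.re))) 0 :=
      Real.continuousAt_rpow_const 0 _ (Or.inr hp0.le)
    have hcomp := hp.tendsto.comp h0
    rw [Real.zero_rpow hp0.ne'] at hcomp
    simpa using hcomp.const_mul C
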